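/- For fixed constants 0 < s < d, with high probability as n → ∞ the random graph G(n, 1/4) satisfies: minimum degree ≥ n/5 and every pair of distinct vertices has at most 3n/20 common neighbors; hence every non-identity automorphism of G(n,1/4) moves at least n/20 vertices, with high probability. -/

import Mathlib

open MeasureTheory Filter
open scoped ENNReal NNReal

abbrev EdgeIdx (n : ℕ) := {e : Sym2 (Fin n) // ¬ e.IsDiag}

noncomputable def erMeasure (n : ℕ) : Measure (EdgeIdx n → Bool) :=
  Measure.pi fun _ => (PMF.bernoulli (1/4) (by norm_num [div_le_one])).toMeasure

def graphOf {n : ℕ} (ω : EdgeIdx n → Bool) : SimpleGraph (Fin n) where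
  Adj u v := ∃ h : u ≠ v, ω ⟨s(u,v), fun hd => h (Sym2.mk_isDiag_iff.mp hd)⟩ = true
  symm := by
    constructor
    rintro u v ⟨h, hw⟩
    refine ⟨h.symm, ?_⟩
    have he : (⟨s(v,u), fun hd => h.symm (Sym2.mk_isDiag_iff.mp hd)⟩ : EdgeIdx n)
        = ⟨s(u,v), fun hd => h (Sym2.mk_isDiag_iff.mp hd)⟩ := Subtype.ext (Sym2.eq_swap)
    rw [he]; exact hw
  loopless := by constructor; rintro v ⟨h, _⟩; exact h rfl


set_option linter.unusedSectionVars false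
section Weight
variable {ι : Type*} [Fintype ι] [DecidableEq ι]

/-- coordinate weight -/
noncomputable def cw (b : Bool) : ℝ≥0 := cond b (1/4) (3/4)

noncomputable def wt (ω : ι → Bool) : ℝ≥0 := ∏ i, cw (ω i)

noncomputable def Ex (f : (ι → Bool) → ℝ≥0) : ℝ≥0 := ∑ ω : ι → Bool, wt ω * f ω

lemma cw_total : cw false + cw true = 1 := by simp [cw]; field_simp; norm_num

lemma sum_prod_bool (F : ι → Bool → ℝ≥0) :
    ∑ ω : ι → Bool, ∏ i, F i (ω i) = ∏ i, (F i false + F i true) := by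
  have := Finset.prod_univ_sum (fun _ : ι => (Finset.univ : Finset Bool)) F
  rw [Fintype.piFinset_univ] at this
  rw [← this]
  congr 1; ext i
  simp [Fintype.sum_bool, add_comm]

lemma Ex_total : (Ex (fun _ : ι → Bool => 1)) = 1 := by
  simp only [Ex, wt, mul_one]
  rw [sum_prod_bool (fun _ b => cw b)]
  simp [cw_total]

/-- Expectation of a product of `cond`s over a finite set of coordinates. -/
lemma Ex_prod_cond (T : Finset ι) (a b : ℝ≥0) :
    Ex (fun ω => ∏ i ∈ T, cond (ω i) a b) = ((3/4)*b + (1/4)*a) ^ T.card := by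
  have key : ∀ ω : ι → Bool, wt ω * (∏ i ∈ T, cond (ω i) a b)
      = ∏ i, (cw (ω i) * (if i ∈ T then cond (ω i) a b else 1)) := by
    intro ω
    rw [Finset.prod_mul_distrib]
    congr 1
    rw [Finset.prod_ite_mem, Finset.univ_inter]
  simp only [Ex, key]
  rw [sum_prod_bool (fun i b' => cw b' * (if i ∈ T then cond b' a b else 1))]
  simp only [Bool.cond_false, Bool.cond_true]
  have : ∀ i : ι, (cw false * (if i ∈ T then b else 1) + cw true * (if i ∈ T then a else 1))
      = if i ∈ T then ((3/4)*b + (1/4)*a) else 1 := by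
    intro i; by_cases h : i ∈ T <;> simp [h, cw] <;> field_simp <;> ring
  simp only [this]
  rw [Finset.prod_ite_mem, Finset.univ_inter, Finset.prod_const]

lemma Ex_add (f g : (ι → Bool) → ℝ≥0) : Ex (fun ω => f ω + g ω) = Ex f + Ex g := by
  simp only [Ex, mul_add, Finset.sum_add_distrib]

lemma Ex_const (c : ℝ≥0) : Ex (fun _ : ι → Bool => c) = c := by
  have := Ex_total (ι := ι)
  simp only [Ex, mul_one] at this ⊢
  rw [← Finset.sum_mul, this, one_mul]

lemma Ex_const_mul (c : ℝ≥0) (f : (ι → Bool) → ℝ≥0) :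
    Ex (fun ω => c * f ω) = c * Ex f := by
  simp only [Ex, Finset.mul_sum]
  exact Finset.sum_congr rfl fun ω _ => by ring


def DepOn (f : (ι → Bool) → ℝ≥0) (U : Finset ι) : Prop :=
  ∀ ω ω' : ι → Bool, (∀ i ∈ U, ω i = ω' i) → f ω = f ω'

lemma DepOn.mono {f : (ι → Bool) → ℝ≥0} {U V : Finset ι} (h : DepOn f U) (hUV : U ⊆ V) :
    DepOn f V := fun ω ω' hag => h ω ω' fun i hi => hag i (hUV hi)

lemma DepOn.prod {κ : Type*} {s : Finset κ} {f : κ → (ι → Bool) → ℝ≥0} {U : Finset ι}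
    (h : ∀ k ∈ s, DepOn (f k) U) : DepOn (fun ω => ∏ k ∈ s, f k ω) U := by
  intro ω ω' hag
  exact Finset.prod_congr rfl fun k hk => h k hk ω ω' hag

/-- Independence / splitting for the weighted sum. -/
lemma Ex_mul_of_depOn (U : Finset ι) (f g : (ι → Bool) → ℝ≥0)
    (hf : DepOn f U) (hg : DepOn g Uᶜ) :
    Ex (fun ω => f ω * g ω) = Ex f * Ex g := by
  classical
  have expand : Ex f * Ex g
      = ∑ p : (ι → Bool) × (ι → Bool), (wt p.1 * f p.1) * (wt p.2 * g p.2) := by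
    rw [Ex, Ex, Finset.sum_mul_sum]
    rw [← Finset.sum_product']
    rfl
  -- the merge involution
  set m : (ι → Bool) → (ι → Bool) → (ι → Bool) :=
    fun α β i => if i ∈ U then α i else β i with hm
  have hinv : Function.Involutive (fun p : (ι → Bool) × (ι → Bool) => (m p.1 p.2, m p.2 p.1)) := by
    intro p
    ext i <;> simp [hm] <;> by_cases h : i ∈ U <;> simp [h]
  rw [expand]
  rw [← Equiv.sum_comp hinv.toPerm
    (fun p : (ι → Bool) × (ι → Bool) => (wt p.1 * f p.1) * (wt p.2 * g p.2))]
  have step : ∀ p : (ι → Bool) × (ι → Bool),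
      (wt (m p.1 p.2) * f (m p.1 p.2)) * (wt (m p.2 p.1) * g (m p.2 p.1))
      = (wt p.1 * (f p.1 * g p.1)) * wt p.2 := by
    rintro ⟨α, β⟩
    have hfm : f (m α β) = f α := hf _ _ (by intro i hi; simp [hm, hi])
    have hgm : g (m β α) = g α := hg _ _ (by intro i hi; simp only [Finset.mem_compl] at hi; simp [hm, hi])
    have hw : wt (m α β) * wt (m β α) = wt α * wt β := by
      simp only [wt, ← Finset.prod_mul_distrib]
      congr 1; ext i
      by_cases h : i ∈ U <;> simp [hm, h, mul_comm]
    calc (wt (m α β) * f (m α β)) * (wt (m β α) * g (m β α))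
        = (wt (m α β) * wt (m β α)) * (f α * g α) := by rw [hfm, hgm]; ring
      _ = (wt α * wt β) * (f α * g α) := by rw [hw]
      _ = (wt α * (f α * g α)) * wt β := by ring
  simp only [Function.Involutive.coe_toPerm, step]
  rw [Fintype.sum_prod_type]
  simp only [← Finset.mul_sum]
  have htot : ∑ β : ι → Bool, wt β = 1 := by
    have := Ex_total (ι := ι); simpa [Ex] using this
  simp only [htot, mul_one, Ex]

end Weight

section More
variable {ι : Type*} [Fintype ι] [DecidableEq ι]

lemma Ex_prod {κ : Type*} [DecidableEq κ] (s : Finset κ) (U : κ → Finset ι)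
    (f : κ → (ι → Bool) → ℝ≥0)
    (hdep : ∀ k ∈ s, DepOn (f k) (U k))
    (hdisj : ∀ k ∈ s, ∀ l ∈ s, k ≠ l → Disjoint (U k) (U l)) :
    Ex (fun ω => ∏ k ∈ s, f k ω) = ∏ k ∈ s, Ex (f k) := by
  classical
  induction s using Finset.induction_on with
  | empty => simpa using Ex_total (ι := ι)
  | @insert a s ha ih =>
    have hsub : ∀ k ∈ s, U k ⊆ (U a)ᶜ := by
      intro k hk
      have := hdisj a (Finset.mem_insert_self a s) k (Finset.mem_insert_of_mem hk)
        (by rintro rfl; exact ha hk)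
      exact le_compl_iff_disjoint_left.mpr this
    have hrest : DepOn (fun ω => ∏ k ∈ s, f k ω) (U a)ᶜ :=
      DepOn.prod fun k hk => (hdep k (Finset.mem_insert_of_mem hk)).mono (hsub k hk)
    have : Ex (fun ω => ∏ k ∈ insert a s, f k ω)
        = Ex (f a) * Ex (fun ω => ∏ k ∈ s, f k ω) := by
      rw [show (fun ω => ∏ k ∈ insert a s, f k ω)
          = (fun ω => f a ω * ∏ k ∈ s, f k ω) by
        funext ω; rw [Finset.prod_insert ha]]
      exact Ex_mul_of_depOn (U a) _ _ (hdep a (Finset.mem_insert_self a s)) hrest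
    rw [this, Finset.prod_insert ha,
      ih (fun k hk => hdep k (Finset.mem_insert_of_mem hk))
        (fun k hk l hl h => hdisj k (Finset.mem_insert_of_mem hk) l (Finset.mem_insert_of_mem hl) h)]

lemma sum_wt_le_Ex (B : Finset (ι → Bool)) (f : (ι → Bool) → ℝ≥0)
    (h : ∀ ω ∈ B, (1:ℝ≥0) ≤ f ω) : ∑ ω ∈ B, wt ω ≤ Ex f := by
  calc ∑ ω ∈ B, wt ω ≤ ∑ ω ∈ B, wt ω * f ω := by
        refine Finset.sum_le_sum fun ω hω => ?_
        conv_lhs => rw [← mul_one (wt ω)]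
        exact mul_le_mul_right (h ω hω) _
    _ ≤ ∑ ω : ι → Bool, wt ω * f ω := Finset.sum_le_sum_of_subset (Finset.subset_univ B)
    _ = Ex f := rfl

end More

lemma meas_all {n : ℕ} (s : Set (EdgeIdx n → Bool)) : MeasurableSet s :=
  s.to_countable.measurableSet

instance erProb (n : ℕ) : IsProbabilityMeasure (erMeasure n) := by
  unfold erMeasure; infer_instance

lemma bernoulli_singleton (b : Bool) :
    (PMF.bernoulli (1/4) (by norm_num [div_le_one])).toMeasure {b} = (cw b : ℝ≥0∞) := by
  rw [PMF.toMeasure_apply_singleton _ _ (measurableSet_singleton b)]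
  rw [PMF.bernoulli_apply]
  cases b
  · simp [cw]
    rw [ENNReal.sub_eq_of_eq_add (by norm_num)]
    rw [← one_div, ENNReal.div_add_div_same]
    norm_num
    exact (ENNReal.div_self (by norm_num) (by norm_num)).symm
  · simp [cw]

lemma erMeasure_singleton {n : ℕ} (ω : EdgeIdx n → Bool) :
    erMeasure n {ω} = (wt ω : ℝ≥0∞) := by
  have : ({ω} : Set (EdgeIdx n → Bool)) = Set.pi Set.univ (fun i => {ω i}) := by
    rw [Set.univ_pi_singleton]
  rw [this, erMeasure, Measure.pi_pi]
  rw [wt, ENNReal.coe_finset_prod]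
  exact Finset.prod_congr rfl fun i _ => bernoulli_singleton (ω i)

lemma erMeasure_le_sum_wt {n : ℕ} (s : Set (EdgeIdx n → Bool)) (F : Finset (EdgeIdx n → Bool))
    (hF : s ⊆ ↑F) : erMeasure n s ≤ ((∑ ω ∈ F, wt ω : ℝ≥0) : ℝ≥0∞) := by
  have : s ⊆ ⋃ ω ∈ F, {ω} := fun x hx => Set.mem_biUnion (hF hx) rfl
  calc erMeasure n s ≤ erMeasure n (⋃ ω ∈ F, {ω}) := measure_mono this
    _ ≤ ∑ ω ∈ F, erMeasure n {ω} := measure_biUnion_finset_le _ _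
    _ = _ := by
        rw [ENNReal.coe_finset_sum]
        exact Finset.sum_congr rfl fun ω _ => erMeasure_singleton ω

def eIdx {n : ℕ} (u v : Fin n) (h : u ≠ v) : EdgeIdx n :=
  ⟨s(u,v), fun hd => h (Sym2.mk_isDiag_iff.mp hd)⟩

lemma adj_iff {n : ℕ} (ω : EdgeIdx n → Bool) {u v : Fin n} (h : u ≠ v) :
    (graphOf ω).Adj u v ↔ ω (eIdx u v h) = true := by
  constructor
  · rintro ⟨h', hw⟩; exact hw
  · intro hw; exact ⟨h, hw⟩

instance decAdj {n : ℕ} (ω : EdgeIdx n → Bool) : DecidableRel (graphOf ω).Adj := fun u v =>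
  if hc : u = v then .isFalse (fun h => (graphOf ω).loopless.irrefl u (hc ▸ h))
  else decidable_of_iff _ (adj_iff ω hc).symm

def Tv {n : ℕ} (x : Fin n) : Finset (EdgeIdx n) :=
  Finset.univ.filter (fun i => x ∈ i.1)

lemma eIdx_mem_Tv {n : ℕ} {x u : Fin n} (h : x ≠ u) : eIdx x u h ∈ Tv x := by
  simp [Tv, eIdx]

lemma Tv_card {n : ℕ} (x : Fin n) : (Tv x).card = n - 1 := by
  classical
  have : (Finset.univ.filter (fun u : Fin n => u ≠ x)).card = n - 1 := by
    rw [Finset.filter_ne' Finset.univ x, Finset.card_erase_of_mem (Finset.mem_univ x)]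
    simp
  rw [← this]
  refine (Finset.card_bij
    (fun u hu => eIdx x u (Ne.symm (by simpa using hu))) ?_ ?_ ?_).symm
  · intro u hu; exact eIdx_mem_Tv _
  · intro u hu u' hu' he
    have h2 := congrArg (fun i : EdgeIdx n => i.1) he
    simp only [eIdx, Sym2.eq_iff] at h2
    have hux : u ≠ x := by simpa using hu
    rcases h2 with ⟨-, h⟩ | ⟨h1, h2⟩
    · exact h
    · exact absurd h2 hux
  · rintro ⟨z, hz⟩ hi
    simp only [Tv, Finset.mem_filter] at hi
    obtain hx := hi.2
    refine ⟨Sym2.Mem.other hx, ?_, Subtype.ext (Sym2.other_spec hx)⟩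
    simpa using Sym2.other_ne hz hx

lemma deg_eq {n : ℕ} (ω : EdgeIdx n → Bool) (x : Fin n) :
    ((graphOf ω).neighborSet x).ncard = ((Tv x).filter (fun i => ω i = true)).card := by
  classical
  have hset : (graphOf ω).neighborSet x
      = ↑(Finset.univ.filter (fun u => (graphOf ω).Adj x u)) := by
    ext u; simp [SimpleGraph.neighborSet]
  rw [hset, Set.ncard_coe_finset]
  refine Finset.card_bij (fun u hu => eIdx x u (Finset.mem_filter.mp hu).2.ne) ?_ ?_ ?_
  · intro u hu
    have hadj := (Finset.mem_filter.mp hu).2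
    refine Finset.mem_filter.mpr ⟨eIdx_mem_Tv _, ?_⟩
    exact (adj_iff ω hadj.ne).mp hadj
  · intro u hu u' hu' he
    have h2 := congrArg (fun i : EdgeIdx n => i.1) he
    simp only [eIdx, Sym2.eq_iff] at h2
    have hux : x ≠ u := (Finset.mem_filter.mp hu).2.ne
    rcases h2 with ⟨-, h⟩ | ⟨h1, h2⟩
    · exact h
    · exact absurd h2.symm hux
  · rintro ⟨z, hz⟩ hi
    simp only [Tv, Finset.mem_filter, Finset.mem_univ, true_and] at hi
    obtain ⟨hx, hw⟩ := hi
    have hne : x ≠ Sym2.Mem.other hx := (Sym2.other_ne hz hx).symm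
    have heq : eIdx x (Sym2.Mem.other hx) hne = ⟨z, hz⟩ := Subtype.ext (Sym2.other_spec hx)
    refine ⟨Sym2.Mem.other hx, ?_, heq⟩
    simp only [Finset.mem_filter, Finset.mem_univ, true_and]
    exact (adj_iff ω hne).mpr (by rw [heq]; exact hw)

section CN
variable {n : ℕ} (ω : EdgeIdx n → Bool) (x y : Fin n)

/-- the index of the edge from `x` to a vertex `w ≠ x, y`. -/
def exw (x y : Fin n) (w : {w : Fin n // w ≠ x ∧ w ≠ y}) : EdgeIdx n :=
  eIdx x w.1 (Ne.symm w.2.1)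

def eyw (x y : Fin n) (w : {w : Fin n // w ≠ x ∧ w ≠ y}) : EdgeIdx n :=
  eIdx y w.1 (Ne.symm w.2.2)

lemma cn_eq (hxy : x ≠ y) :
    ((graphOf ω).commonNeighbors x y).ncard
      = (Finset.univ.filter (fun w : {w : Fin n // w ≠ x ∧ w ≠ y} =>
          ω (exw x y w) = true ∧ ω (eyw x y w) = true)).card := by
  classical
  have hset : (graphOf ω).commonNeighbors x y
      = ↑(Finset.univ.filter (fun w : Fin n => (graphOf ω).Adj x w ∧ (graphOf ω).Adj y w)) := by
    ext w
    simp [SimpleGraph.commonNeighbors, SimpleGraph.neighborSet]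
  rw [hset, Set.ncard_coe_finset]
  refine Finset.card_bij (fun w hw => ⟨w, ?_, ?_⟩) ?_ ?_ ?_
  · exact ((Finset.mem_filter.mp hw).2.1).ne'
  · exact ((Finset.mem_filter.mp hw).2.2).ne'
  · intro w hw
    have h := (Finset.mem_filter.mp hw).2
    refine Finset.mem_filter.mpr ⟨Finset.mem_univ _, ?_, ?_⟩
    · exact (adj_iff ω h.1.ne).mp h.1
    · exact (adj_iff ω h.2.ne).mp h.2
  · intro w hw w' hw' he
    exact congrArg Subtype.val he
  · rintro ⟨w, hwx, hwy⟩ hw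
    have h := (Finset.mem_filter.mp hw).2
    refine ⟨w, ?_, rfl⟩
    refine Finset.mem_filter.mpr ⟨Finset.mem_univ _, ?_, ?_⟩
    · exact (adj_iff ω (Ne.symm hwx)).mpr h.1
    · exact (adj_iff ω (Ne.symm hwy)).mpr h.2

lemma card_kappa (hxy : x ≠ y) :
    Fintype.card {w : Fin n // w ≠ x ∧ w ≠ y} = n - 2 := by
  classical
  rw [Fintype.card_subtype]
  have : Finset.univ.filter (fun w : Fin n => w ≠ x ∧ w ≠ y)
      = (Finset.univ.erase y).erase x := by
    ext w
    simp only [Finset.mem_filter, Finset.mem_univ, true_and, Finset.mem_erase]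
    tauto
  rw [this, Finset.card_erase_of_mem, Finset.card_erase_of_mem (Finset.mem_univ y)]
  · simp [Nat.sub_sub]
  · exact Finset.mem_erase.mpr ⟨hxy, Finset.mem_univ x⟩

lemma exw_ne_eyw (hxy : x ≠ y) (w w' : {w : Fin n // w ≠ x ∧ w ≠ y}) :
    exw x y w ≠ eyw x y w' := by
  intro he
  have h := congrArg (fun i : EdgeIdx n => i.1) he
  simp only [exw, eyw, eIdx, Sym2.eq_iff] at h
  rcases h with ⟨h1, h2⟩ | ⟨h1, h2⟩
  · exact hxy h1
  · exact w.2.2 h2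

lemma exw_inj (hxy : x ≠ y) (w w' : {w : Fin n // w ≠ x ∧ w ≠ y}) (h : w ≠ w') :
    exw x y w ≠ exw x y w' := by
  intro he
  have h2 := congrArg (fun i : EdgeIdx n => i.1) he
  simp only [exw, eIdx, Sym2.eq_iff] at h2
  rcases h2 with ⟨-, h3⟩ | ⟨h3, h4⟩
  · exact h (Subtype.ext h3)
  · exact w'.2.1 h3.symm

lemma eyw_inj (hxy : x ≠ y) (w w' : {w : Fin n // w ≠ x ∧ w ≠ y}) (h : w ≠ w') :
    eyw x y w ≠ eyw x y w' := by
  intro he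
  have h2 := congrArg (fun i : EdgeIdx n => i.1) he
  simp only [eyw, eIdx, Sym2.eq_iff] at h2
  rcases h2 with ⟨-, h3⟩ | ⟨h3, h4⟩
  · exact h (Subtype.ext h3)
  · exact w'.2.2 h3.symm

end CN



section EventBounds
open Finset
variable {n : ℕ}

lemma one_le_ratio_pow {a d : ℕ} (h : d ≤ a) :
    (1:ℝ≥0) ≤ (3/2)^a * (2/3)^d := by
  have : (3/2:ℝ≥0)^a = (3/2)^(a-d) * (3/2)^d := by
    rw [← pow_add, Nat.sub_add_cancel h]
  rw [this, mul_assoc, ← mul_pow]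
  have h1 : (3/2:ℝ≥0) * (2/3) = 1 := by norm_num
  rw [h1, one_pow, mul_one]
  refine one_le_pow₀ ?_
  rw [← NNReal.coe_le_coe]; push_cast; norm_num

lemma deg_event_bound (v : Fin n) :
    erMeasure n {ω : EdgeIdx n → Bool | ¬ ((n / 5 : ℝ) ≤ ((graphOf ω).neighborSet v).ncard)}
      ≤ (((3/2 : ℝ≥0)^(⌈(n:ℝ)/5⌉₊) * (11/12)^(n-1) : ℝ≥0) : ℝ≥0∞) := by
  classical
  set a : ℕ := ⌈(n:ℝ)/5⌉₊ with ha
  set dg : (EdgeIdx n → Bool) → ℕ := fun ω => ((Tv v).filter (fun i => ω i = true)).card with hdg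
  set B : Finset (EdgeIdx n → Bool) :=
    Finset.univ.filter (fun ω => ¬ ((n / 5 : ℝ) ≤ ((graphOf ω).neighborSet v).ncard)) with hB
  have hsub : {ω : EdgeIdx n → Bool | ¬ ((n / 5 : ℝ) ≤ ((graphOf ω).neighborSet v).ncard)} ⊆ ↑B := by
    intro ω hω; rw [Finset.mem_coe, hB, Finset.mem_filter]; exact ⟨Finset.mem_univ _, hω⟩
  refine le_trans (erMeasure_le_sum_wt _ B hsub) ?_
  rw [ENNReal.coe_le_coe]
  have key : ∀ ω ∈ B, (1:ℝ≥0) ≤ (3/2)^a * (2/3)^(dg ω) := by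
    intro ω hω
    refine one_le_ratio_pow ?_
    have hlt : ((dg ω : ℝ)) < n / 5 := by
      have h2 := (Finset.mem_filter.mp hω).2
      have hcast : ((graphOf ω).neighborSet v).ncard = dg ω := deg_eq ω v
      rw [hcast] at h2
      exact lt_of_not_ge h2
    have : dg ω < a := Nat.lt_ceil.mpr hlt
    omega
  refine le_trans (sum_wt_le_Ex B _ key) ?_
  have hpt : ∀ ω : EdgeIdx n → Bool, (3/2:ℝ≥0)^a * (2/3)^(dg ω)
      = (3/2)^a * ∏ i ∈ Tv v, cond (ω i) (2/3) 1 := by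
    intro ω
    congr 1
    have hc : ∀ i ∈ Tv v, cond (ω i) (2/3:ℝ≥0) 1 = if ω i = true then (2/3:ℝ≥0) else 1 := by
      intro i _; cases h : ω i <;> simp
    rw [Finset.prod_congr rfl hc, Finset.prod_ite, Finset.prod_const, Finset.prod_const,
      one_pow, mul_one, hdg]
  rw [show (fun ω : EdgeIdx n → Bool => (3/2:ℝ≥0)^a * (2/3)^(dg ω)) = fun ω =>
      (3/2:ℝ≥0)^a * ∏ i ∈ Tv v, cond (ω i) (2/3) 1 from funext hpt]
  rw [Ex_const_mul, Ex_prod_cond, Tv_card]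
  have : ((3:ℝ≥0)/4*1 + 1/4*(2/3)) = 11/12 := by field_simp; ring
  rw [this]


lemma one_le_half_pow {m c : ℕ} (h : m ≤ c) :
    (1:ℝ≥0) ≤ (1/2)^m * 2^c := by
  have : (2:ℝ≥0)^c = 2^(c-m) * 2^m := by
    rw [← pow_add, Nat.sub_add_cancel h]
  rw [this, ← mul_assoc, mul_comm ((1/2:ℝ≥0)^m), mul_assoc, ← mul_pow]
  have h1 : (1/2:ℝ≥0) * 2 = 1 := by norm_num
  rw [h1, one_pow, mul_one]
  refine one_le_pow₀ ?_
  rw [← NNReal.coe_le_coe]; push_cast; norm_num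

lemma cn_event_bound {x y : Fin n} (hxy : x ≠ y) :
    erMeasure n {ω : EdgeIdx n → Bool |
        ¬ ((((graphOf ω).commonNeighbors x y).ncard : ℝ) ≤ 3 * n / 20)}
      ≤ (((17/16 : ℝ≥0)^(n-2) * (1/2)^(⌈3*(n:ℝ)/20⌉₊) : ℝ≥0) : ℝ≥0∞) := by
  classical
  set m : ℕ := ⌈3*(n:ℝ)/20⌉₊ with hm
  set cnt : (EdgeIdx n → Bool) → ℕ := fun ω =>
    (Finset.univ.filter (fun w : {w : Fin n // w ≠ x ∧ w ≠ y} =>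
      ω (exw x y w) = true ∧ ω (eyw x y w) = true)).card with hcnt
  set B : Finset (EdgeIdx n → Bool) := Finset.univ.filter (fun ω : EdgeIdx n → Bool =>
    ¬ ((((graphOf ω).commonNeighbors x y).ncard : ℝ) ≤ 3 * n / 20)) with hB
  have hsub : {ω : EdgeIdx n → Bool |
      ¬ ((((graphOf ω).commonNeighbors x y).ncard : ℝ) ≤ 3 * n / 20)} ⊆ ↑B := by
    intro ω hω; rw [Finset.mem_coe, hB, Finset.mem_filter]; exact ⟨Finset.mem_univ _, hω⟩
  refine le_trans (erMeasure_le_sum_wt _ B hsub) ?_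
  rw [ENNReal.coe_le_coe]
  have key : ∀ ω ∈ B, (1:ℝ≥0) ≤ (1/2)^m * 2^(cnt ω) := by
    intro ω hω
    refine one_le_half_pow ?_
    have h2 := (Finset.mem_filter.mp hω).2
    have hcast : ((graphOf ω).commonNeighbors x y).ncard = cnt ω := cn_eq ω x y hxy
    rw [hcast] at h2
    exact Nat.ceil_le.mpr (le_of_lt (lt_of_not_ge h2))
  refine le_trans (sum_wt_le_Ex B _ key) ?_
  have hpt : (fun ω : EdgeIdx n → Bool => (1/2:ℝ≥0)^m * 2^(cnt ω))
      = fun ω => (1/2:ℝ≥0)^m * ∏ w : {w : Fin n // w ≠ x ∧ w ≠ y},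
          (1 + cond (ω (exw x y w)) (1:ℝ≥0) 0 * cond (ω (eyw x y w)) 1 0) := by
    funext ω
    congr 1
    have hfac : ∀ w ∈ (Finset.univ : Finset {w : Fin n // w ≠ x ∧ w ≠ y}),
        (1 + cond (ω (exw x y w)) (1:ℝ≥0) 0 * cond (ω (eyw x y w)) 1 0)
        = if (ω (exw x y w) = true ∧ ω (eyw x y w) = true) then 2 else 1 := by
      intro w _
      cases h1 : ω (exw x y w) <;> cases h2 : ω (eyw x y w) <;>
        simp [h1, h2] <;> norm_num
    rw [Finset.prod_congr rfl hfac, Finset.prod_ite, Finset.prod_const, Finset.prod_const,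
      one_pow, mul_one, hcnt]
  rw [hpt, Ex_const_mul]
  have hdep : ∀ w ∈ (Finset.univ : Finset {w : Fin n // w ≠ x ∧ w ≠ y}),
      DepOn (fun ω : EdgeIdx n → Bool =>
        1 + cond (ω (exw x y w)) (1:ℝ≥0) 0 * cond (ω (eyw x y w)) 1 0)
        ({exw x y w, eyw x y w} : Finset (EdgeIdx n)) := by
    intro w _ ω ω' hag
    have e1 := hag _ (Finset.mem_insert_self _ _)
    have e2 := hag _ (Finset.mem_insert_of_mem (Finset.mem_singleton_self _))
    simp only [e1, e2]
  have hdisj : ∀ w ∈ (Finset.univ : Finset {w : Fin n // w ≠ x ∧ w ≠ y}),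
      ∀ w' ∈ (Finset.univ : Finset {w : Fin n // w ≠ x ∧ w ≠ y}), w ≠ w' →
      Disjoint ({exw x y w, eyw x y w} : Finset (EdgeIdx n)) {exw x y w', eyw x y w'} := by
    intro w _ w' _ hne
    rw [Finset.disjoint_left]
    intro i hi hi'
    have hmem : i = exw x y w ∨ i = eyw x y w := by simpa using hi
    have hmem' : i = exw x y w' ∨ i = eyw x y w' := by simpa using hi'
    rcases hmem with h1 | h1 <;> subst h1 <;> rcases hmem' with h2 | h2
    · exact exw_inj x y hxy w w' hne h2
    · exact exw_ne_eyw x y hxy w w' h2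
    · exact exw_ne_eyw x y hxy w' w h2.symm
    · exact eyw_inj x y hxy w w' hne h2
  rw [Ex_prod Finset.univ (fun w => ({exw x y w, eyw x y w} : Finset (EdgeIdx n))) _ hdep hdisj]
  have hone : ∀ w : {w : Fin n // w ≠ x ∧ w ≠ y},
      Ex (fun ω : EdgeIdx n → Bool =>
        1 + cond (ω (exw x y w)) (1:ℝ≥0) 0 * cond (ω (eyw x y w)) 1 0) = 17/16 := by
    intro w
    have h2 : Ex (fun ω : EdgeIdx n → Bool =>
        cond (ω (exw x y w)) (1:ℝ≥0) 0 * cond (ω (eyw x y w)) 1 0) = 1/16 := by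
      have hpair : (fun ω : EdgeIdx n → Bool =>
          cond (ω (exw x y w)) (1:ℝ≥0) 0 * cond (ω (eyw x y w)) 1 0)
          = fun ω => ∏ i ∈ ({exw x y w, eyw x y w} : Finset (EdgeIdx n)), cond (ω i) 1 0 :=
        funext fun ω => (Finset.prod_pair (f := fun i => cond (ω i) (1:ℝ≥0) 0) (exw_ne_eyw x y hxy w w)).symm
      rw [hpair, Ex_prod_cond, Finset.card_pair (exw_ne_eyw x y hxy w w)]
      rw [← NNReal.coe_inj]; push_cast; norm_num
    have hsplit : Ex (fun ω : EdgeIdx n → Bool =>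
        1 + cond (ω (exw x y w)) (1:ℝ≥0) 0 * cond (ω (eyw x y w)) 1 0)
        = Ex (fun _ => 1) + Ex (fun ω : EdgeIdx n → Bool =>
            cond (ω (exw x y w)) (1:ℝ≥0) 0 * cond (ω (eyw x y w)) 1 0) := Ex_add _ _
    rw [hsplit, Ex_total, h2]
    rw [← NNReal.coe_inj]; push_cast; norm_num
  rw [Finset.prod_congr rfl (fun w _ => hone w), Finset.prod_const, Finset.card_univ,
    card_kappa x y hxy, mul_comm]

end EventBounds


section Deterministic
variable {n : ℕ}

lemma auto_moves (ω : EdgeIdx n → Bool)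
    (hdeg : ∀ v : Fin n, (n / 5 : ℝ) ≤ ((graphOf ω).neighborSet v).ncard)
    (hcn : ∀ x y : Fin n, x ≠ y →
      (((graphOf ω).commonNeighbors x y).ncard : ℝ) ≤ 3 * n / 20)
    (f : Equiv.Perm (Fin n)) (hf : f ≠ Equiv.refl (Fin n))
    (hauto : ∀ u v, (graphOf ω).Adj (f u) (f v) ↔ (graphOf ω).Adj u v) :
    (n / 20 : ℝ) ≤ ((Finset.univ.filter fun v : Fin n => f v ≠ v).card : ℝ) := by
  classical
  obtain ⟨x, hx⟩ : ∃ x, f x ≠ x := by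
    by_contra h
    push_neg at h
    exact hf (Equiv.ext h)
  set y := f x with hy
  have hxy : x ≠ y := by
    intro h
    rw [hy] at h
    exact hx h.symm
  set G := graphOf ω
  set M := Finset.univ.filter (fun v : Fin n => f v ≠ v) with hM
  set A := G.neighborSet x with hA
  set C := G.commonNeighbors x y with hC
  have hsub : A \ C ⊆ ↑M := by
    intro w hw
    rw [Finset.mem_coe, hM, Finset.mem_filter]
    refine ⟨Finset.mem_univ _, ?_⟩
    intro hfw
    apply hw.2
    have hadjx : G.Adj x w := hw.1
    have hadjy : G.Adj y w := by
      have := (hauto x w).mpr hadjx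
      rwa [← hy, hfw] at this
    exact ⟨hadjx, hadjy⟩
  have h1 : A.ncard ≤ (A \ C).ncard + C.ncard := by
    refine le_trans (Set.ncard_le_ncard (by
      intro a ha
      by_cases h : a ∈ C
      · exact Or.inr h
      · exact Or.inl ⟨ha, h⟩) ((A \ C).toFinite.union C.toFinite)) ?_
    exact Set.ncard_union_le _ _
  have h2 : (A \ C).ncard ≤ M.card := by
    have := Set.ncard_le_ncard hsub (Set.toFinite _)
    rwa [Set.ncard_coe_finset] at this
  have h3 := hdeg x
  have h4 := hcn x y hxy
  have hcast : ((A.ncard : ℝ)) ≤ ((A \ C).ncard : ℝ) + (C.ncard : ℝ) := by exact_mod_cast h1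
  have hcast2 : (((A \ C).ncard : ℝ)) ≤ (M.card : ℝ) := by exact_mod_cast h2
  have : (n / 5 : ℝ) ≤ (M.card : ℝ) + 3 * n / 20 := by
    calc (n / 5 : ℝ) ≤ (A.ncard : ℝ) := h3
      _ ≤ ((A \ C).ncard : ℝ) + (C.ncard : ℝ) := hcast
      _ ≤ (M.card : ℝ) + 3 * n / 20 := add_le_add hcast2 h4
  linarith

end Deterministic

lemma q1_lt_one : (3/2:ℝ)^((1/5):ℝ) * (11/12) < 1 := by
  have key : (((3/2:ℝ))^((1/5):ℝ))^(5:ℕ) = 3/2 := by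
    rw [← Real.rpow_natCast ((3/2:ℝ)^((1/5):ℝ)) 5, ← Real.rpow_mul (by norm_num)]
    norm_num
  have h15 : ((3/2:ℝ))^((1/5):ℝ) < 12/11 := by
    refine lt_of_pow_lt_pow_left₀ 5 (by norm_num) ?_
    rw [key]; norm_num
  have hpos : (0:ℝ) < 11/12 := by norm_num
  calc (3/2:ℝ)^((1/5):ℝ) * (11/12) < (12/11) * (11/12) :=
        mul_lt_mul_of_pos_right h15 hpos
    _ = 1 := by norm_num

lemma q2_lt_one : (17/16:ℝ) * (1/2)^((3/20):ℝ) < 1 := by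
  have key : (((1/2:ℝ))^((3/20):ℝ))^(20:ℕ) = (1/2:ℝ)^(3:ℕ) := by
    rw [← Real.rpow_natCast ((1/2:ℝ)^((3/20):ℝ)) 20, ← Real.rpow_mul (by norm_num)]
    norm_num
  have hnn : (0:ℝ) ≤ (17/16:ℝ) * (1/2)^((3/20):ℝ) := by positivity
  refine (pow_lt_one_iff_of_nonneg hnn (by norm_num : (20:ℕ) ≠ 0)).mp ?_
  rw [mul_pow, key]
  norm_num

lemma real_limit :
    Tendsto (fun n : ℕ => (n:ℝ) * ((3/2)^(⌈(n:ℝ)/5⌉₊) * (11/12)^(n-1))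
      + (n:ℝ) * ((n:ℝ) * ((17/16)^(n-2) * (1/2)^(⌈3*(n:ℝ)/20⌉₊)))) atTop (nhds 0) := by
  set q1 : ℝ := (3/2)^((1/5):ℝ) * (11/12) with hq1
  set q2 : ℝ := (17/16) * (1/2)^((3/20):ℝ) with hq2
  have hq1n : 0 ≤ q1 := by positivity
  have hq2n : 0 ≤ q2 := by positivity
  have hlim1 : Tendsto (fun n : ℕ => (3/2)*(12/11) * ((n:ℝ) * q1^n)) atTop (nhds 0) := by
    have hs := (summable_pow_mul_geometric_of_norm_lt_one (R := ℝ) 1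
      (by rw [Real.norm_eq_abs, abs_of_nonneg hq1n]; exact q1_lt_one)).tendsto_atTop_zero
    have := hs.const_mul ((3/2:ℝ)*(12/11))
    rw [mul_zero] at this
    simpa [pow_one] using this
  have hlim2 : Tendsto (fun n : ℕ => (n:ℝ)^2 * q2^n) atTop (nhds 0) := by
    have hs := (summable_pow_mul_geometric_of_norm_lt_one (R := ℝ) 2
      (by rw [Real.norm_eq_abs, abs_of_nonneg hq2n]; exact q2_lt_one)).tendsto_atTop_zero
    simpa using hs
  have hsum := hlim1.add hlim2
  rw [add_zero] at hsum
  refine squeeze_zero' ?_ ?_ hsum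
  · filter_upwards [eventually_ge_atTop 1] with n hn
    positivity
  · filter_upwards [eventually_ge_atTop 1] with n hn
    have hb1 : (3/2:ℝ)^(⌈(n:ℝ)/5⌉₊) * (11/12)^(n-1) ≤ (3/2)*(12/11) * q1^n := by
      have e1 : (3/2:ℝ)^(⌈(n:ℝ)/5⌉₊) ≤ (3/2) * ((3/2:ℝ)^((1/5):ℝ))^n := by
        have : ((⌈(n:ℝ)/5⌉₊ : ℝ)) ≤ (n:ℝ)/5 + 1 :=
          le_of_lt (Nat.ceil_lt_add_one (by positivity))
        calc (3/2:ℝ)^(⌈(n:ℝ)/5⌉₊) = (3/2:ℝ)^((⌈(n:ℝ)/5⌉₊ : ℝ)) :=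
              (Real.rpow_natCast _ _).symm
          _ ≤ (3/2:ℝ)^((n:ℝ)/5 + 1) :=
              Real.rpow_le_rpow_of_exponent_le (by norm_num) this
          _ = (3/2) * ((3/2:ℝ)^((1/5):ℝ))^n := by
              rw [Real.rpow_add (by norm_num), Real.rpow_one,
                show (n:ℝ)/5 = (1/5:ℝ) * (n:ℝ) by ring,
                Real.rpow_mul (by norm_num), Real.rpow_natCast]
              ring
      have e2 : (11/12:ℝ)^(n-1) ≤ (12/11) * (11/12)^n := by
        rw [pow_sub₀ _ (by norm_num) hn, pow_one, div_eq_mul_inv, mul_comm,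
          show ((11:ℝ) * 12⁻¹)⁻¹ = 12/11 by norm_num]
      calc (3/2:ℝ)^(⌈(n:ℝ)/5⌉₊) * (11/12)^(n-1)
          ≤ ((3/2) * ((3/2:ℝ)^((1/5):ℝ))^n) * ((12/11) * (11/12)^n) := by
            refine mul_le_mul e1 e2 (by positivity) (by positivity)
        _ = (3/2)*(12/11) * q1^n := by rw [hq1, mul_pow]; ring
    have hb2 : (17/16:ℝ)^(n-2) * (1/2)^(⌈3*(n:ℝ)/20⌉₊) ≤ q2^n := by
      have e1 : (17/16:ℝ)^(n-2) ≤ (17/16)^n :=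
        pow_le_pow_right₀ (by norm_num) (Nat.sub_le n 2)
      have e2 : (1/2:ℝ)^(⌈3*(n:ℝ)/20⌉₊) ≤ ((1/2:ℝ)^((3/20):ℝ))^n := by
        calc (1/2:ℝ)^(⌈3*(n:ℝ)/20⌉₊) = (1/2:ℝ)^((⌈3*(n:ℝ)/20⌉₊ : ℝ)) :=
              (Real.rpow_natCast _ _).symm
          _ ≤ (1/2:ℝ)^(3*(n:ℝ)/20) :=
              Real.rpow_le_rpow_of_exponent_ge (by norm_num) (by norm_num) (Nat.le_ceil _)
          _ = ((1/2:ℝ)^((3/20):ℝ))^n := by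
              rw [show 3*(n:ℝ)/20 = (3/20:ℝ) * (n:ℝ) by ring,
                Real.rpow_mul (by norm_num), Real.rpow_natCast]
      calc (17/16:ℝ)^(n-2) * (1/2)^(⌈3*(n:ℝ)/20⌉₊)
          ≤ (17/16)^n * ((1/2:ℝ)^((3/20):ℝ))^n :=
            mul_le_mul e1 e2 (by positivity) (by positivity)
        _ = q2^n := by rw [hq2, mul_pow]
    have hn0 : (0:ℝ) ≤ (n:ℝ) := by positivity
    calc (n:ℝ) * ((3/2)^(⌈(n:ℝ)/5⌉₊) * (11/12)^(n-1))
          + (n:ℝ) * ((n:ℝ) * ((17/16)^(n-2) * (1/2)^(⌈3*(n:ℝ)/20⌉₊)))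
        ≤ (n:ℝ) * ((3/2)*(12/11) * q1^n) + (n:ℝ) * ((n:ℝ) * q2^n) := by
          refine add_le_add (by gcongr) ?_
          refine mul_le_mul_of_nonneg_left (mul_le_mul_of_nonneg_left hb2 hn0) hn0
      _ = (3/2)*(12/11) * ((n:ℝ) * q1^n) + (n:ℝ)^2 * q2^n := by ring

noncomputable def dB (n : ℕ) : ℝ≥0 := (3/2)^(⌈(n:ℝ)/5⌉₊) * (11/12)^(n-1)
noncomputable def cB (n : ℕ) : ℝ≥0 := (17/16)^(n-2) * (1/2)^(⌈3*(n:ℝ)/20⌉₊)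
noncomputable def epsN (n : ℕ) : ℝ≥0 := n * dB n + n * (n * cB n)

lemma epsN_tendsto : Tendsto (fun n => ((epsN n : ℝ≥0) : ℝ≥0∞)) atTop (nhds 0) := by
  rw [← ENNReal.coe_zero, ENNReal.tendsto_coe, ← NNReal.tendsto_coe]
  have : (fun n : ℕ => ((epsN n : ℝ≥0) : ℝ)) = fun n : ℕ =>
      (n:ℝ) * ((3/2)^(⌈(n:ℝ)/5⌉₊) * (11/12)^(n-1))
      + (n:ℝ) * ((n:ℝ) * ((17/16)^(n-2) * (1/2)^(⌈3*(n:ℝ)/20⌉₊))) := by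
    funext n
    simp only [epsN, dB, cB]
    push_cast
    ring
  rw [this, NNReal.coe_zero]
  exact real_limit

lemma lower_bound (n : ℕ) :
    1 - ((epsN n : ℝ≥0) : ℝ≥0∞) ≤ erMeasure n {ω : EdgeIdx n → Bool |
      (∀ v : Fin n, (n / 5 : ℝ) ≤ ((graphOf ω).neighborSet v).ncard) ∧
      (∀ x y : Fin n, x ≠ y →
        (((graphOf ω).commonNeighbors x y).ncard : ℝ) ≤ 3 * n / 20) ∧
      (∀ f : Equiv.Perm (Fin n), f ≠ Equiv.refl (Fin n) →
        (∀ u v, (graphOf ω).Adj (f u) (f v) ↔ (graphOf ω).Adj u v) →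
        (n / 20 : ℝ) ≤ ((Finset.univ.filter fun v : Fin n => f v ≠ v).card : ℝ))} := by
  classical
  set μ := erMeasure n with hμ
  set D : Set (EdgeIdx n → Bool) :=
    {ω | ∀ v : Fin n, (n / 5 : ℝ) ≤ ((graphOf ω).neighborSet v).ncard} with hD
  set C : Set (EdgeIdx n → Bool) :=
    {ω | ∀ x y : Fin n, x ≠ y →
      (((graphOf ω).commonNeighbors x y).ncard : ℝ) ≤ 3 * n / 20} with hC
  have hDbound : μ Dᶜ ≤ (n : ℝ≥0∞) * ((dB n : ℝ≥0) : ℝ≥0∞) := by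
    have hsub : Dᶜ ⊆ ⋃ v : Fin n,
        {ω : EdgeIdx n → Bool | ¬ ((n / 5 : ℝ) ≤ ((graphOf ω).neighborSet v).ncard)} := by
      intro ω hω
      rw [Set.mem_compl_iff, hD, Set.mem_setOf_eq] at hω
      push_neg at hω
      obtain ⟨v, hv⟩ := hω
      exact Set.mem_iUnion.mpr ⟨v, not_le.mpr hv⟩
    calc μ Dᶜ ≤ μ (⋃ v : Fin n, _) := measure_mono hsub
      _ ≤ ∑ v : Fin n, μ {ω : EdgeIdx n → Bool |
            ¬ ((n / 5 : ℝ) ≤ ((graphOf ω).neighborSet v).ncard)} :=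
          measure_iUnion_fintype_le _ _
      _ ≤ ∑ _v : Fin n, ((dB n : ℝ≥0) : ℝ≥0∞) :=
          Finset.sum_le_sum fun v _ => deg_event_bound v
      _ = (n : ℝ≥0∞) * ((dB n : ℝ≥0) : ℝ≥0∞) := by
          rw [Finset.sum_const, Finset.card_univ, Fintype.card_fin, nsmul_eq_mul]
  have hCbound : μ Cᶜ ≤ (n : ℝ≥0∞) * ((n : ℝ≥0∞) * ((cB n : ℝ≥0) : ℝ≥0∞)) := by
    have hsub : Cᶜ ⊆ ⋃ x : Fin n, ⋃ y : Fin n,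
        {ω : EdgeIdx n → Bool | x ≠ y ∧
          ¬ ((((graphOf ω).commonNeighbors x y).ncard : ℝ) ≤ 3 * n / 20)} := by
      intro ω hω
      rw [Set.mem_compl_iff, hC, Set.mem_setOf_eq] at hω
      push_neg at hω
      obtain ⟨x, y, hxy, hv⟩ := hω
      exact Set.mem_iUnion.mpr ⟨x, Set.mem_iUnion.mpr ⟨y, hxy, not_le.mpr hv⟩⟩
    have hxy_bound : ∀ x y : Fin n,
        μ {ω : EdgeIdx n → Bool | x ≠ y ∧
          ¬ ((((graphOf ω).commonNeighbors x y).ncard : ℝ) ≤ 3 * n / 20)}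
        ≤ ((cB n : ℝ≥0) : ℝ≥0∞) := by
      intro x y
      by_cases hxy : x = y
      · have : {ω : EdgeIdx n → Bool | x ≠ y ∧
            ¬ ((((graphOf ω).commonNeighbors x y).ncard : ℝ) ≤ 3 * n / 20)} = ∅ := by
          ext ω; simp [hxy]
        rw [this]; simp
      · refine le_trans (measure_mono (fun ω hω => hω.2)) ?_
        exact cn_event_bound hxy
    calc μ Cᶜ ≤ μ (⋃ x : Fin n, ⋃ y : Fin n, _) := measure_mono hsub
      _ ≤ ∑ x : Fin n, μ (⋃ y : Fin n,
            {ω : EdgeIdx n → Bool | x ≠ y ∧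
              ¬ ((((graphOf ω).commonNeighbors x y).ncard : ℝ) ≤ 3 * n / 20)}) :=
          measure_iUnion_fintype_le _ _
      _ ≤ ∑ x : Fin n, ∑ y : Fin n, μ {ω : EdgeIdx n → Bool | x ≠ y ∧
              ¬ ((((graphOf ω).commonNeighbors x y).ncard : ℝ) ≤ 3 * n / 20)} :=
          Finset.sum_le_sum fun x _ => measure_iUnion_fintype_le _ _
      _ ≤ ∑ _x : Fin n, ∑ _y : Fin n, ((cB n : ℝ≥0) : ℝ≥0∞) :=
          Finset.sum_le_sum fun x _ => Finset.sum_le_sum fun y _ => hxy_bound x y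
      _ = (n : ℝ≥0∞) * ((n : ℝ≥0∞) * ((cB n : ℝ≥0) : ℝ≥0∞)) := by
          rw [Finset.sum_const, Finset.sum_const, Finset.card_univ, Fintype.card_fin,
            nsmul_eq_mul, nsmul_eq_mul]
  have hDC : D ∩ C ⊆ {ω : EdgeIdx n → Bool |
      (∀ v : Fin n, (n / 5 : ℝ) ≤ ((graphOf ω).neighborSet v).ncard) ∧
      (∀ x y : Fin n, x ≠ y →
        (((graphOf ω).commonNeighbors x y).ncard : ℝ) ≤ 3 * n / 20) ∧
      (∀ f : Equiv.Perm (Fin n), f ≠ Equiv.refl (Fin n) →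
        (∀ u v, (graphOf ω).Adj (f u) (f v) ↔ (graphOf ω).Adj u v) →
        (n / 20 : ℝ) ≤ ((Finset.univ.filter fun v : Fin n => f v ≠ v).card : ℝ))} := by
    rintro ω ⟨h1, h2⟩
    exact ⟨h1, h2, fun f hf ha => auto_moves ω h1 h2 f hf ha⟩
  have hcoe : ((epsN n : ℝ≥0) : ℝ≥0∞)
      = (n : ℝ≥0∞) * ((dB n : ℝ≥0) : ℝ≥0∞)
        + (n : ℝ≥0∞) * ((n : ℝ≥0∞) * ((cB n : ℝ≥0) : ℝ≥0∞)) := by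
    simp only [epsN]
    push_cast
    ring
  calc 1 - ((epsN n : ℝ≥0) : ℝ≥0∞)
      ≤ 1 - (μ Dᶜ + μ Cᶜ) := by
        rw [hcoe]
        exact tsub_le_tsub_left (add_le_add hDbound hCbound) 1
    _ ≤ μ (D ∩ C) := by
        rw [tsub_le_iff_right]
        have huniv : (Set.univ : Set (EdgeIdx n → Bool)) ⊆ (D ∩ C) ∪ (Dᶜ ∪ Cᶜ) := by
          intro ω _
          by_cases h1 : ω ∈ D
          · by_cases h2 : ω ∈ C
            · exact Or.inl ⟨h1, h2⟩
            · exact Or.inr (Or.inr h2)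
          · exact Or.inr (Or.inl h1)
        calc (1 : ℝ≥0∞) = μ Set.univ := (measure_univ).symm
          _ ≤ μ ((D ∩ C) ∪ (Dᶜ ∪ Cᶜ)) := measure_mono huniv
          _ ≤ μ (D ∩ C) + μ (Dᶜ ∪ Cᶜ) := measure_union_le _ _
          _ ≤ μ (D ∩ C) + (μ Dᶜ + μ Cᶜ) := by
              exact add_le_add_right (measure_union_le _ _) _
    _ ≤ _ := measure_mono hDC

theorem er_degree_codegree_automorphism_whp :
    Tendsto (fun n : ℕ => erMeasure n {ω : EdgeIdx n → Bool |
      (∀ v : Fin n, (n / 5 : ℝ) ≤ ((graphOf ω).neighborSet v).ncard) ∧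
      (∀ x y : Fin n, x ≠ y →
        (((graphOf ω).commonNeighbors x y).ncard : ℝ) ≤ 3 * n / 20) ∧
      (∀ f : Equiv.Perm (Fin n), f ≠ Equiv.refl (Fin n) →
        (∀ u v, (graphOf ω).Adj (f u) (f v) ↔ (graphOf ω).Adj u v) →
        (n / 20 : ℝ) ≤ ((Finset.univ.filter fun v : Fin n => f v ≠ v).card : ℝ))})
      atTop (nhds 1) := by
  refine tendsto_of_tendsto_of_tendsto_of_le_of_le
    (g := fun n : ℕ => 1 - ((epsN n : ℝ≥0) : ℝ≥0∞)) (h := fun _ : ℕ => (1:ℝ≥0∞))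
    ?_ tendsto_const_nhds (fun n => lower_bound n) (fun n => prob_le_one)
  have h1 : Tendsto (fun _ : ℕ => (1:ℝ≥0∞)) atTop (nhds 1) := tendsto_const_nhds
  have := ENNReal.Tendsto.sub h1 epsN_tendsto (Or.inl ENNReal.one_ne_top)
  simpa using this
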